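/- For a simplex with squared edge lengths x1,...,x6, the cosine of the dihedral angle along the first edge equals (∂Δ/∂x4) / (u(x1,x2,x6)·u(x1,x3,x5))^(1/2), where u(a,b,c) = −a² − b² − c² + 2ab + 2ac + 2bc. -/

import Mathlib

noncomputable section

def ufun (a b c : ℝ) : ℝ := -a^2 - b^2 - c^2 + 2*a*b + 2*a*c + 2*b*c

/-- The partial derivative ∂Δ/∂x4 of the Cayley–Menger-type polynomial Δ. -/
def deltaX4 (x1 x2 x3 x4 x5 x6 : ℝ) : ℝ :=
  x1*(-x1+x2+x3-x4+x5+x6) - x1*x4 + x2*x5 + x3*x6 - x2*x3 - x5*x6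

def SimplexEdges (v0 v1 v2 v3 : EuclideanSpace ℝ (Fin 3))
    (y1 y2 y3 y4 y5 y6 : ℝ) : Prop :=
  dist v0 v1 = y1 ∧ dist v0 v2 = y2 ∧ dist v0 v3 = y3 ∧
  dist v2 v3 = y4 ∧ dist v1 v3 = y5 ∧ dist v1 v2 = y6

/-- The dihedral angle of the simplex (v0,v1,v2,v3) along the edge v0v1 (the first
edge): the angle between the components of v2 − v0 and v3 − v0 orthogonal to v1 − v0. -/
def dihedralAngle (v0 v1 v2 v3 : EuclideanSpace ℝ (Fin 3)) : ℝ :=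
  InnerProductGeometry.angle
    ((v2 - v0) - (((inner ℝ (v2 - v0) (v1 - v0) : ℝ)) / ‖v1 - v0‖^2) • (v1 - v0))
    ((v3 - v0) - (((inner ℝ (v3 - v0) (v1 - v0) : ℝ)) / ‖v1 - v0‖^2) • (v1 - v0))

/-- cos of the dihedral angle along the first edge equals
(∂Δ/∂x4)/√(u(x1,x2,x6)·u(x1,x3,x5)). -/
theorem cos_dihedral_eq
    (y1 y2 y3 y4 y5 y6 : ℝ) (v0 v1 v2 v3 : EuclideanSpace ℝ (Fin 3))
    (hedges : SimplexEdges v0 v1 v2 v3 y1 y2 y3 y4 y5 y6)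
    (hnd : AffineIndependent ℝ ![v0, v1, v2, v3]) :
    Real.cos (dihedralAngle v0 v1 v2 v3) =
      deltaX4 (y1^2) (y2^2) (y3^2) (y4^2) (y5^2) (y6^2) /
        Real.sqrt (ufun (y1^2) (y2^2) (y6^2) * ufun (y1^2) (y3^2) (y5^2)) := by
  obtain ⟨h1, h2, h3, h4, h5, h6⟩ := hedges
  have hv01 : v0 ≠ v1 := by
    intro h
    have : (0 : Fin 4) = 1 := hnd.injective (show ![v0,v1,v2,v3] 0 = ![v0,v1,v2,v3] 1 by simpa using h)
    simp at this
  have hy1 : 0 < y1 := h1 ▸ dist_pos.2 hv01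
  set a : EuclideanSpace ℝ (Fin 3) := v1 - v0 with ha
  set b : EuclideanSpace ℝ (Fin 3) := v2 - v0 with hb
  set c : EuclideanSpace ℝ (Fin 3) := v3 - v0 with hc
  have hna : ‖a‖ = y1 := by rw [← h1, dist_eq_norm', ha]
  have hnb : ‖b‖ = y2 := by rw [← h2, dist_eq_norm', hb]
  have hnc : ‖c‖ = y3 := by rw [← h3, dist_eq_norm', hc]
  have hbc : ‖b - c‖ = y4 := by
    rw [← h4, dist_eq_norm]; congr 1; rw [hb, hc]; abel
  have hac : ‖a - c‖ = y5 := by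
    rw [← h5, dist_eq_norm]; congr 1; rw [ha, hc]; abel
  have hab : ‖a - b‖ = y6 := by
    rw [← h6, dist_eq_norm]; congr 1; rw [ha, hb]; abel
  have eab : (inner ℝ a b : ℝ) = (y1^2 + y2^2 - y6^2)/2 := by
    have := norm_sub_sq_real a b
    rw [hab, hna, hnb] at this; linarith
  have eba : (inner ℝ b a : ℝ) = (y1^2 + y2^2 - y6^2)/2 := by
    rw [real_inner_comm]; exact eab
  have eac : (inner ℝ a c : ℝ) = (y1^2 + y3^2 - y5^2)/2 := by
    have := norm_sub_sq_real a c
    rw [hac, hna, hnc] at this; linarith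
  have eca : (inner ℝ c a : ℝ) = (y1^2 + y3^2 - y5^2)/2 := by
    rw [real_inner_comm]; exact eac
  have ebc : (inner ℝ b c : ℝ) = (y2^2 + y3^2 - y4^2)/2 := by
    have := norm_sub_sq_real b c
    rw [hbc, hnb, hnc] at this; linarith
  have ecb : (inner ℝ c b : ℝ) = (y2^2 + y3^2 - y4^2)/2 := by
    rw [real_inner_comm]; exact ebc
  have eaa : (inner ℝ a a : ℝ) = y1^2 := by rw [real_inner_self_eq_norm_sq, hna]
  have ebb : (inner ℝ b b : ℝ) = y2^2 := by rw [real_inner_self_eq_norm_sq, hnb]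
  have ecc : (inner ℝ c c : ℝ) = y3^2 := by rw [real_inner_self_eq_norm_sq, hnc]
  set p : EuclideanSpace ℝ (Fin 3) := b - (((inner ℝ b a : ℝ)) / ‖a‖^2) • a with hp
  set q : EuclideanSpace ℝ (Fin 3) := c - (((inner ℝ c a : ℝ)) / ‖a‖^2) • a with hq
  have hy1sq : (y1:ℝ)^2 ≠ 0 := by positivity
  have hpq : (inner ℝ p q : ℝ) =
      deltaX4 (y1^2) (y2^2) (y3^2) (y4^2) (y5^2) (y6^2) / (4*y1^2) := by
    rw [hp, hq]
    simp only [inner_sub_left, inner_sub_right, real_inner_smul_left,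
      real_inner_smul_right, eab, eba, eac, eca, ebc, ecb, eaa, hna, deltaX4]
    field_simp
    ring
  have hpp : ‖p‖^2 = ufun (y1^2) (y2^2) (y6^2) / (4*y1^2) := by
    rw [← real_inner_self_eq_norm_sq, hp]
    simp only [inner_sub_left, inner_sub_right, real_inner_smul_left,
      real_inner_smul_right, eab, eba, eaa, ebb, hna, ufun]
    field_simp
    ring
  have hqq : ‖q‖^2 = ufun (y1^2) (y3^2) (y5^2) / (4*y1^2) := by
    rw [← real_inner_self_eq_norm_sq, hq]
    simp only [inner_sub_left, inner_sub_right, real_inner_smul_left,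
      real_inner_smul_right, eac, eca, eaa, ecc, hna, ufun]
    field_simp
    ring
  have hu1 : 0 ≤ ufun (y1^2) (y2^2) (y6^2) := by
    have h : 0 ≤ ufun (y1^2) (y2^2) (y6^2) / (4*y1^2) := hpp ▸ sq_nonneg ‖p‖
    rcases div_nonneg_iff.mp h with ⟨h', _⟩ | ⟨_, h'⟩
    · exact h'
    · exact absurd h' (not_le.mpr (by positivity))
  have hu2 : 0 ≤ ufun (y1^2) (y3^2) (y5^2) := by
    have h : 0 ≤ ufun (y1^2) (y3^2) (y5^2) / (4*y1^2) := hqq ▸ sq_nonneg ‖q‖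
    rcases div_nonneg_iff.mp h with ⟨h', _⟩ | ⟨_, h'⟩
    · exact h'
    · exact absurd h' (not_le.mpr (by positivity))
  have hnorm : ‖p‖ * ‖q‖ =
      Real.sqrt (ufun (y1^2) (y2^2) (y6^2) * ufun (y1^2) (y3^2) (y5^2)) / (4*y1^2) := by
    have hp' : ‖p‖ = Real.sqrt (ufun (y1^2) (y2^2) (y6^2)) / Real.sqrt (4*y1^2) := by
      rw [← Real.sqrt_div hu1, ← hpp, Real.sqrt_sq (norm_nonneg _)]
    have hq' : ‖q‖ = Real.sqrt (ufun (y1^2) (y3^2) (y5^2)) / Real.sqrt (4*y1^2) := by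
      rw [← Real.sqrt_div hu2, ← hqq, Real.sqrt_sq (norm_nonneg _)]
    rw [hp', hq', div_mul_div_comm, ← Real.sqrt_mul hu1,
      Real.mul_self_sqrt (by positivity)]
  have hangle : dihedralAngle v0 v1 v2 v3 = InnerProductGeometry.angle p q := rfl
  rw [hangle, InnerProductGeometry.cos_angle, hpq, hnorm]
  rcases eq_or_ne (Real.sqrt (ufun (y1^2) (y2^2) (y6^2) * ufun (y1^2) (y3^2) (y5^2))) 0
    with h | h
  · simp [h]
  · field_simp
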